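/- arXiv:1305.5376 — 5 statements merged into one kernel-verified Lean document; each statement's English description precedes it below -/
import Mathlib

section
/- Define C(x) = (1/2)·log₂(1+x). Let h₁, h₂, h₃, P ≥ 0 with h₁² ≥ h₂² ≥ h₃² and h₂²P > 1/2. Then the non-restricted upper bound C̄_N = C((h₂²+h₃²)P) + C(min{h₁²+h₃², (|h₂|+|h₃|)²}·P) satisfies C̄_N - 2·C(h₂²P - 1/2) ≤ 2. -/
theorem nonrestricted_additive_gap (h₁ h₂ h₃ P : ℝ)
    (hh₁ : 0 ≤ h₁) (hh₂ : 0 ≤ h₂) (hh₃ : 0 ≤ h₃) (hP : 0 ≤ P)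
    (h12 : h₂ ^ 2 ≤ h₁ ^ 2) (h23 : h₃ ^ 2 ≤ h₂ ^ 2) (hpow : 1 / 2 < h₂ ^ 2 * P) :
    ((1 / 2) * Real.logb 2 (1 + (h₂ ^ 2 + h₃ ^ 2) * P) +
      (1 / 2) * Real.logb 2 (1 + min (h₁ ^ 2 + h₃ ^ 2) ((|h₂| + |h₃|) ^ 2) * P)) -
      2 * ((1 / 2) * Real.logb 2 (1 + (h₂ ^ 2 * P - 1 / 2))) ≤ 2 := by
  have hx : (0:ℝ) < 1 + (h₂ ^ 2 * P - 1 / 2) := by linarith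
  have h3le : h₃ ≤ h₂ := by nlinarith
  have hlog4 : Real.logb 2 (4 * (1 + (h₂ ^ 2 * P - 1 / 2)))
      = 2 + Real.logb 2 (1 + (h₂ ^ 2 * P - 1 / 2)) := by
    rw [Real.logb_mul (by norm_num) (ne_of_gt hx)]
    have : Real.logb 2 4 = 2 := by
      rw [show (4:ℝ) = 2 ^ (2:ℕ) by norm_num, Real.logb_pow,
        Real.logb_self_eq_one (by norm_num)]
      norm_num
    rw [this]
  have key : ∀ y : ℝ, 0 ≤ y → y * P ≤ 4 * (h₂ ^ 2 * P) →
      Real.logb 2 (1 + y * P) ≤ 2 + Real.logb 2 (1 + (h₂ ^ 2 * P - 1 / 2)) := by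
    intro y hy hle
    have h2 : 1 + y * P ≤ 4 * (1 + (h₂ ^ 2 * P - 1 / 2)) := by nlinarith
    calc Real.logb 2 (1 + y * P)
        ≤ Real.logb 2 (4 * (1 + (h₂ ^ 2 * P - 1 / 2))) :=
          Real.logb_le_logb_of_le (by norm_num) (by positivity) h2
      _ = 2 + Real.logb 2 (1 + (h₂ ^ 2 * P - 1 / 2)) := hlog4
  have k1 := key (h₂ ^ 2 + h₃ ^ 2) (by positivity) (by nlinarith)
  have k2 := key (min (h₁ ^ 2 + h₃ ^ 2) ((|h₂| + |h₃|) ^ 2))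
    (le_min (by positivity) (by positivity))
    (by
      have hm : min (h₁ ^ 2 + h₃ ^ 2) ((|h₂| + |h₃|) ^ 2) ≤ (h₂ + h₃) ^ 2 := by
        rw [abs_of_nonneg hh₂, abs_of_nonneg hh₃] at *
        exact min_le_right _ _
      nlinarith [mul_le_mul_of_nonneg_right hm hP, mul_nonneg (mul_nonneg hh₂ hh₃) hP, sq_nonneg (h₂ - h₃)])
  linarith
end

section
/- Define C(x) = (1/2)·log₂(1+x). Let h₂, h₃, P ≥ 0 with h₃² ≤ h₂² and h₂²P > 1/2. Then the restricted upper bound C̄_R = 2·C((h₂²+h₃²)P) satisfies C̄_R - 2·C(h₂²P - 1/2) ≤ 1. -/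
theorem restricted_additive_gap (h₂ h₃ P : ℝ)
    (hh₂ : 0 ≤ h₂) (hh₃ : 0 ≤ h₃) (hP : 0 ≤ P)
    (h23 : h₃ ^ 2 ≤ h₂ ^ 2) (hpow : 1 / 2 < h₂ ^ 2 * P) :
    2 * ((1 / 2) * Real.logb 2 (1 + (h₂ ^ 2 + h₃ ^ 2) * P)) -
      2 * ((1 / 2) * Real.logb 2 (1 + (h₂ ^ 2 * P - 1 / 2))) ≤ 1 := by
  have hb : (0:ℝ) < 1 + (h₂ ^ 2 * P - 1 / 2) := by linarith
  have hle : 1 + (h₂ ^ 2 + h₃ ^ 2) * P ≤ 2 * (1 + (h₂ ^ 2 * P - 1 / 2)) := by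
    nlinarith [mul_le_mul_of_nonneg_right h23 hP]
  have ha : (0:ℝ) < 1 + (h₂ ^ 2 + h₃ ^ 2) * P := by
    nlinarith [mul_nonneg (add_nonneg (sq_nonneg h₂) (sq_nonneg h₃)) hP]
  have h1 : Real.logb 2 (1 + (h₂ ^ 2 + h₃ ^ 2) * P)
      ≤ Real.logb 2 (2 * (1 + (h₂ ^ 2 * P - 1 / 2))) :=
    Real.logb_le_logb_of_le one_lt_two ha hle
  rw [Real.logb_mul (by norm_num) hb.ne'] at h1
  simp [Real.logb_self_eq_one] at h1
  linarith
end

section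
/- Define C(x) = (1/2)·log₂(1+x). For the symmetric case (all channel gains equal 1), for every P > 1/2: min{3·C(P), 2·C(2P)} - 2·C(P - 1/2) ≤ 1. -/
theorem symmetric_gap_high_power (P : ℝ) (hP : 1 / 2 < P) :
    min (3 * ((1 / 2) * Real.logb 2 (1 + P))) (2 * ((1 / 2) * Real.logb 2 (1 + 2 * P))) -
      2 * ((1 / 2) * Real.logb 2 (1 + (P - 1 / 2))) ≤ 1 := by
  have h1 : (0:ℝ) < 1 + (P - 1/2) := by linarith
  have key : (1 : ℝ) + 2 * P = 2 * (1 + (P - 1/2)) := by ring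
  have : Real.logb 2 (1 + 2 * P) = 1 + Real.logb 2 (1 + (P - 1/2)) := by
    rw [key, Real.logb_mul (by norm_num) (ne_of_gt h1), Real.logb_self_eq_one] <;> norm_num
  calc min (3 * ((1 / 2) * Real.logb 2 (1 + P))) (2 * ((1 / 2) * Real.logb 2 (1 + 2 * P))) -
      2 * ((1 / 2) * Real.logb 2 (1 + (P - 1 / 2)))
      ≤ 2 * ((1 / 2) * Real.logb 2 (1 + 2 * P)) -
      2 * ((1 / 2) * Real.logb 2 (1 + (P - 1 / 2))) := by
        gcongr; exact min_le_right _ _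
    _ = 1 := by rw [this]; ring
end

section
/- Define C(x) = (1/2)·log₂(1+x) and C⁺(x) = max{0, C(x)}. For the symmetric case with all gains 1 and any P with 0 ≤ P ≤ 1/2: min{3·C(P), 2·C(2P)} - min{C(2P), 2·C(P)} ≤ 1. -/
theorem symmetric_gap_low_power (P : ℝ) (hP0 : 0 ≤ P) (hP : P ≤ 1 / 2) :
    min (3 * ((1 / 2) * Real.logb 2 (1 + P))) (2 * ((1 / 2) * Real.logb 2 (1 + 2 * P))) -
      min ((1 / 2) * Real.logb 2 (1 + 2 * P)) (2 * ((1 / 2) * Real.logb 2 (1 + P))) ≤ 1 := by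
  set a := Real.logb 2 (1 + P) with ha
  set b := Real.logb 2 (1 + 2 * P) with hb
  have h2a : b ≤ 2 * a := by
    have h1 : (0:ℝ) < 1 + 2 * P := by linarith
    have h2 : 1 + 2 * P ≤ (1 + P) ^ 2 := by nlinarith
    calc b ≤ Real.logb 2 ((1 + P) ^ 2) :=
          Real.logb_le_logb_of_le (by norm_num) h1 h2
      _ = 2 * a := by rw [ha, Real.logb_pow]; push_cast; ring
  have hb1 : b ≤ 1 := by
    have : (1 : ℝ) + 2 * P ≤ 2 := by linarith
    calc b ≤ Real.logb 2 2 := Real.logb_le_logb_of_le (by norm_num) (by linarith) this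
      _ = 1 := Real.logb_self_eq_one (by norm_num)
  have hmin1 : min (3 * ((1 / 2) * a)) (2 * ((1 / 2) * b)) ≤ b := by
    have := min_le_right (3 * ((1 / 2) * a)) (2 * ((1 / 2) * b))
    linarith
  have hmin2 : (1/2) * b ≤ min ((1 / 2) * b) (2 * ((1 / 2) * a)) := by
    apply le_min le_rfl
    linarith
  linarith
end

section
/- Consider the linear program: maximize R₁₂+R₁₃+R₂₁+R₂₃+R₃₁+R₃₂ over nonnegative reals subject to R₃₁+R₃₂ ≤ c₃, R₁₂+R₁₃+R₂₁+R₂₃ ≤ c₃, R₁₂+R₁₃+R₃₁+R₃₂ ≤ c₂, R₂₁+R₂₃+R₃₁+R₃₂ ≤ c₁', and the total sum ≤ c_tot, where c₃ ≤ c₂ ≤ c₁' and c₃ ≤ c_tot. The optimal value equals min{ (c₁'+c₂+c₃)/2, c_tot, 2c₃ }. -/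
theorem cdf_linear_program (c₁' c₂ c₃ ctot : ℝ)
    (hc₃ : 0 ≤ c₃) (h32 : c₃ ≤ c₂) (h21 : c₂ ≤ c₁') (h3t : c₃ ≤ ctot) :
    IsGreatest
      {s : ℝ | ∃ R₁₂ R₁₃ R₂₁ R₂₃ R₃₁ R₃₂ : ℝ,
        0 ≤ R₁₂ ∧ 0 ≤ R₁₃ ∧ 0 ≤ R₂₁ ∧ 0 ≤ R₂₃ ∧ 0 ≤ R₃₁ ∧ 0 ≤ R₃₂ ∧
        R₃₁ + R₃₂ ≤ c₃ ∧
        R₁₂ + R₁₃ + R₂₁ + R₂₃ ≤ c₃ ∧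
        R₁₂ + R₁₃ + R₃₁ + R₃₂ ≤ c₂ ∧
        R₂₁ + R₂₃ + R₃₁ + R₃₂ ≤ c₁' ∧
        R₁₂ + R₁₃ + R₂₁ + R₂₃ + R₃₁ + R₃₂ ≤ ctot ∧
        s = R₁₂ + R₁₃ + R₂₁ + R₂₃ + R₃₁ + R₃₂}
      (min (min ((c₁' + c₂ + c₃) / 2) ctot) (2 * c₃)) := by
  set m := min (min ((c₁' + c₂ + c₃) / 2) ctot) (2 * c₃) with hm
  have hm1 : m ≤ (c₁' + c₂ + c₃) / 2 := le_trans (min_le_left _ _) (min_le_left _ _)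
  have hm2 : m ≤ ctot := le_trans (min_le_left _ _) (min_le_right _ _)
  have hm3 : m ≤ 2 * c₃ := min_le_right _ _
  have hm0 : 0 ≤ m := le_min (le_min (by linarith) (by linarith)) (by linarith)
  constructor
  · set t := max 0 (max (m - c₃) (2 * m - c₁' - c₂)) with ht
    have ht0 : 0 ≤ t := le_max_left _ _
    have ht1 : m - c₃ ≤ t := le_trans (le_max_left _ _) (le_max_right _ _)
    have ht2 : 2 * m - c₁' - c₂ ≤ t := le_trans (le_max_right _ _) (le_max_right _ _)
    have ht3 : t ≤ c₃ := max_le hc₃ (max_le (by linarith) (by linarith))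
    have ht4 : t ≤ m := max_le hm0 (max_le (by linarith) (by linarith))
    set A := min t (c₂ - (m - t)) with hA
    have hA1 : A ≤ t := min_le_left _ _
    have hA2 : A ≤ c₂ - (m - t) := min_le_right _ _
    have hA0 : 0 ≤ A := le_min ht0 (by linarith)
    have hA5 : m - c₁' ≤ A := by
      refine le_min ?_ (by linarith)
      rcases le_or_gt m c₁' with h | h
      · linarith
      · linarith
    exact ⟨A, 0, t - A, 0, m - t, 0, hA0, le_refl 0, by linarith, le_refl 0,
      by linarith, le_refl 0, by linarith, by linarith, by linarith, by linarith,
      by linarith, by ring⟩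
  · rintro s ⟨R₁₂, R₁₃, R₂₁, R₂₃, R₃₁, R₃₂, h1, h2, h3, h4, h5, h6, g1, g2, g3, g4, g5, hs⟩
    exact le_min (le_min (by linarith) (by linarith)) (by linarith)
end
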